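/- Let B be a unital C*-algebra and let F, F' ∈ B be self-adjoint elements with F² = 1 and F'² = 1, and suppose that FF' + F'F ≥ λ·1 for some real number λ > −2. Then F and F' are connected by a norm-continuous path of self-adjoint unitary elements of B; explicitly, the path t ↦ sgn(cos(t)·F + sin(t)·F'), for t ∈ [0, π/2], is norm-continuous, consists of self-adjoint unitaries, and joins F to F'. -/

import Mathlib

section Aux

/-- The real sign function is continuous away from zero. -/
lemma auxSignCont : ContinuousOn Real.sign {x : ℝ | x ≠ 0} := by
  intro x hx
  apply ContinuousAt.continuousWithinAt
  rcases lt_or_gt_of_ne (hx : x ≠ 0) with h | h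
  · have hev : Real.sign =ᶠ[nhds x] fun _ => (-1 : ℝ) :=
      Filter.eventually_of_mem (Iio_mem_nhds h) fun y hy => Real.sign_of_neg hy
    exact ContinuousAt.congr continuousAt_const hev.symm
  · have hev : Real.sign =ᶠ[nhds x] fun _ => (1 : ℝ) :=
      Filter.eventually_of_mem (Ioi_mem_nhds h) fun y hy => Real.sign_of_pos hy
    exact ContinuousAt.congr continuousAt_const hev.symm

/-- Lipschitz-type estimate for `x ↦ (√x)⁻¹` on `[c₀, ∞)`. -/
lemma auxInvSqrtLip {c₀ x y : ℝ} (hc₀ : 0 < c₀) (hx : c₀ ≤ x) (hy : c₀ ≤ y) :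
    |(Real.sqrt x)⁻¹ - (Real.sqrt y)⁻¹| ≤ |y - x| / (2 * c₀ * Real.sqrt c₀) := by
  have hx0 : 0 < x := hc₀.trans_le hx
  have hy0 : 0 < y := hc₀.trans_le hy
  set sx := Real.sqrt x with hsx
  set sy := Real.sqrt y with hsy
  set sc := Real.sqrt c₀ with hsc
  have hsx0 : 0 < sx := Real.sqrt_pos.mpr hx0
  have hsy0 : 0 < sy := Real.sqrt_pos.mpr hy0
  have hsc0 : 0 < sc := Real.sqrt_pos.mpr hc₀
  have hscx : sc ≤ sx := Real.sqrt_le_sqrt hx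
  have hscy : sc ≤ sy := Real.sqrt_le_sqrt hy
  have hex : sx * sx = x := Real.mul_self_sqrt hx0.le
  have hey : sy * sy = y := Real.mul_self_sqrt hy0.le
  have hec : sc * sc = c₀ := Real.mul_self_sqrt hc₀.le
  have hden : 0 < (sy + sx) * (sx * sy) := by positivity
  have key : sx⁻¹ - sy⁻¹ = (y - x) / ((sy + sx) * (sx * sy)) := by
    rw [eq_div_iff hden.ne', ← hex, ← hey]
    field_simp
    ring
  rw [key, abs_div, abs_of_pos hden]
  have hnum : |y - x| ≤ |y - x| := le_refl _
  have hdenge : 2 * c₀ * sc ≤ (sy + sx) * (sx * sy) := by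
    have h1 : sc * sc ≤ sx * sy :=
      mul_le_mul hscx hscy hsc0.le (hsc0.le.trans hscx)
    have h2 : sc + sc ≤ sy + sx := add_le_add hscy hscx
    calc 2 * c₀ * sc = (sc + sc) * (sc * sc) := by rw [hec]; ring
    _ ≤ (sy + sx) * (sx * sy) :=
        mul_le_mul h2 h1 (by positivity) (by positivity)
  exact div_le_div_of_nonneg_left (abs_nonneg _) (by positivity) hdenge

end Aux

/-- **Lemma 2.13 (explicit form).** In a unital C*-algebra `B`, if `F, F'` are self-adjoint
with `F² = 1`, `F'² = 1` and the anticommutator `F*F' + F'*F` is bounded below by `λ·1` for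
some real `λ > -2`, then the path `t ↦ sgn(cos t • F + sin t • F')`, `t ∈ [0, π/2]`
(where `sgn` is the continuous functional calculus with the sign function), is norm-continuous,
consists of self-adjoint unitaries, and joins `F` to `F'`. -/
theorem sign_path_selfAdjoint_unitary_homotopy
    {B : Type*} [CStarAlgebra B] [PartialOrder B] [StarOrderedRing B]
    (F F' : B) (hF : IsSelfAdjoint F) (hF' : IsSelfAdjoint F')
    (hF2 : F ^ 2 = 1) (hF'2 : F' ^ 2 = 1)
    (lam : ℝ) (hlam : -2 < lam)
    (hanti : lam • (1 : B) ≤ F * F' + F' * F)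
    (g : ℝ → B)
    (hg : g = fun t => cfc Real.sign (Real.cos t • F + Real.sin t • F')) :
    ContinuousOn g (Set.Icc 0 (Real.pi / 2)) ∧
      g 0 = F ∧ g (Real.pi / 2) = F' ∧
      ∀ t ∈ Set.Icc (0 : ℝ) (Real.pi / 2),
        IsSelfAdjoint (g t) ∧ g t ∈ unitary B := by
  obtain hB | hB := subsingleton_or_nontrivial B
  · subst hg
    refine ⟨(continuousOn_const (c := (0:B))).congr fun t _ => Subsingleton.elim _ _,
      Subsingleton.elim _ _, Subsingleton.elim _ _, fun t ht =>
      ⟨Subsingleton.elim _ _, Subsingleton.elim _ _, Subsingleton.elim _ _⟩⟩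
  -- Notation
  set K : B := F * F' + F' * F with hKdef
  have hK : IsSelfAdjoint K := by
    rw [hKdef, IsSelfAdjoint, star_add, star_mul, star_mul, hF.star_eq, hF'.star_eq, add_comm]
  set lam' : ℝ := min lam 0 with hlam'def
  have hlam'le : lam' ≤ 0 := min_le_right _ _
  have hlam'lam : lam' ≤ lam := min_le_left _ _
  have hlam'gt : -2 < lam' := lt_min hlam (by norm_num)
  set c₀ : ℝ := 1 + lam' / 2 with hc₀def
  have hc₀ : 0 < c₀ := by rw [hc₀def]; linarith
  -- the path of self-adjoint elements
  set a : ℝ → B := fun t => Real.cos t • F + Real.sin t • F' with hadef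
  have haSA : ∀ t, IsSelfAdjoint (a t) := fun t =>
    (IsSelfAdjoint.smul (star_trivial _) hF).add (IsSelfAdjoint.smul (star_trivial _) hF')
  -- square of the path
  have hsq : ∀ t : ℝ, a t ^ 2 = 1 + (Real.sin t * Real.cos t) • K := by
    intro t
    have h1 : (Real.sin t ^ 2 + Real.cos t ^ 2) • (1 : B) = (1 : B) := by
      rw [Real.sin_sq_add_cos_sq, one_smul]
    rw [← h1, hadef]
    simp only [sq, add_mul, mul_add, smul_mul_smul_comm]
    rw [show F * F = (1:B) by rw [← sq, hF2], show F' * F' = (1:B) by rw [← sq, hF'2], hKdef]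
    module
  -- scalar range of sin t * cos t
  have hσmem : ∀ t ∈ Set.Icc (0:ℝ) (Real.pi/2),
      Real.sin t * Real.cos t ∈ Set.Icc (0:ℝ) (1/2) := by
    intro t ht
    have hpi := Real.pi_pos
    constructor
    · exact mul_nonneg
        (Real.sin_nonneg_of_nonneg_of_le_pi ht.1 (ht.2.trans (by linarith)))
        (Real.cos_nonneg_of_mem_Icc ⟨by linarith [ht.1], ht.2⟩)
    · have h := Real.sin_le_one (2 * t)
      rw [Real.sin_two_mul] at h
      linarith
  -- lower bound on spectrum of K
  have hKspec : ∀ k ∈ spectrum ℝ K, lam ≤ k := by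
    intro k hk
    refine (algebraMap_le_iff_le_spectrum (R := ℝ) (r := lam) (a := K) hK).mp ?_ k hk
    rwa [Algebra.algebraMap_eq_smul_one]
  -- positivity of 1 + σ * k on the spectrum of K
  have hposK : ∀ σ ∈ Set.Icc (0:ℝ) (1/2), ∀ k ∈ spectrum ℝ K, c₀ ≤ 1 + σ * k := by
    intro σ hσ k hk
    rcases le_or_gt 0 k with h | h
    · have : 0 ≤ σ * k := mul_nonneg hσ.1 h
      rw [hc₀def]; linarith
    · have h1 : (1/2) * k ≤ σ * k := mul_le_mul_of_nonpos_right hσ.2 h.le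
      have h2 : lam ≤ k := hKspec k hk
      rw [hc₀def]; nlinarith
  -- lower order bound on a t ^ 2
  have hbd : ∀ t ∈ Set.Icc (0:ℝ) (Real.pi/2), algebraMap ℝ B c₀ ≤ a t ^ 2 := by
    intro t ht
    obtain ⟨hσ0, hσ2⟩ := hσmem t ht
    set σ := Real.sin t * Real.cos t
    have hscal : lam' / 2 ≤ σ * lam := by
      have h1 : σ * lam' ≤ σ * lam := mul_le_mul_of_nonneg_left hlam'lam hσ0
      nlinarith
    have step1 : (lam'/2) • (1:B) ≤ (σ * lam) • (1:B) := by
      have h := smul_nonneg (show (0:ℝ) ≤ σ * lam - lam'/2 by linarith)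
        (zero_le_one (α := B))
      rw [sub_smul] at h
      exact sub_nonneg.mp h
    calc algebraMap ℝ B c₀ = 1 + (lam'/2) • (1:B) := by
          rw [Algebra.algebraMap_eq_smul_one, hc₀def, add_smul, one_smul]
      _ ≤ 1 + (σ * lam) • (1:B) := add_le_add_right step1 1
      _ = 1 + σ • (lam • (1:B)) := by rw [smul_smul]
      _ ≤ 1 + σ • K := add_le_add_right (smul_le_smul_of_nonneg_left hanti hσ0) 1
      _ = a t ^ 2 := (hsq t).symm
  -- spectrum of a t is bounded away from 0
  have hspec2 : ∀ t ∈ Set.Icc (0:ℝ) (Real.pi/2), ∀ x ∈ spectrum ℝ (a t), c₀ ≤ x ^ 2 := by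
    intro t ht x hx
    have h1 : ∀ y ∈ spectrum ℝ (a t ^ 2), c₀ ≤ y :=
      (algebraMap_le_iff_le_spectrum (R := ℝ) (a := a t ^ 2) ((haSA t).pow 2)).mp (hbd t ht)
    refine h1 _ ?_
    rw [← cfc_pow_id (R := ℝ) (a t) 2 (haSA t),
      cfc_map_spectrum (R := ℝ) (f := fun x : ℝ => x ^ 2) (a := a t) (haSA t) (by fun_prop)]
    exact ⟨x, hx, rfl⟩
  have hne : ∀ t ∈ Set.Icc (0:ℝ) (Real.pi/2), ∀ x ∈ spectrum ℝ (a t), x ≠ 0 := by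
    intro t ht x hx h0
    have := hspec2 t ht x hx
    rw [h0] at this
    norm_num at this
    linarith
  have hsgncont : ∀ t ∈ Set.Icc (0:ℝ) (Real.pi/2), ContinuousOn Real.sign (spectrum ℝ (a t)) :=
    fun t ht => auxSignCont.mono fun x hx => hne t ht x hx
  have hgdef : ∀ t, g t = cfc Real.sign (a t) := fun t => by rw [hg]
  have hSAg : ∀ t, IsSelfAdjoint (g t) := fun t => by
    rw [hgdef]; exact cfc_predicate Real.sign (a t)
  have hg2 : ∀ t ∈ Set.Icc (0:ℝ) (Real.pi/2), g t ^ 2 = 1 := by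
    intro t ht
    rw [hgdef, ← cfc_pow Real.sign 2 (a t) (hsgncont t ht) (haSA t)]
    have heq1 : (spectrum ℝ (a t)).EqOn (fun x => Real.sign x ^ 2) (fun _ => (1:ℝ)) := by
      intro x hx
      rcases Real.sign_apply_eq_of_ne_zero x (hne t ht x hx) with h | h <;> simp [h]
    rw [cfc_congr heq1, cfc_const (1:ℝ) (a t) (haSA t), map_one]
  have hunit : ∀ t ∈ Set.Icc (0:ℝ) (Real.pi/2), g t ∈ unitary B := fun t ht =>
    ⟨by rw [(hSAg t).star_eq, ← sq, hg2 t ht], by rw [(hSAg t).star_eq, ← sq, hg2 t ht]⟩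
  -- boundary values
  have hbv : ∀ G : B, IsSelfAdjoint G → G ^ 2 = 1 → cfc Real.sign G = G := by
    intro G hGsa hG2
    have hsp : ∀ x ∈ spectrum ℝ G, x ^ 2 = 1 := by
      intro x hx
      have h2 : x ^ 2 ∈ spectrum ℝ (G ^ 2) := by
        rw [← cfc_pow_id (R := ℝ) G 2 hGsa,
          cfc_map_spectrum (R := ℝ) (f := fun x : ℝ => x ^ 2) (a := G) hGsa (by fun_prop)]
        exact ⟨x, hx, rfl⟩
      rw [hG2, spectrum.one_eq (𝕜 := ℝ)] at h2
      simpa using h2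
    have heq : (spectrum ℝ G).EqOn Real.sign id := by
      intro x hx
      have h := hsp x hx
      have hx1 : x = 1 ∨ x = -1 := by
        rcases mul_eq_zero.mp (show (x - 1) * (x + 1) = 0 by nlinarith) with h' | h'
        · left; linarith
        · right; linarith
      rcases hx1 with h' | h' <;> subst h'
      · simp [Real.sign_one]
      · simp [Real.sign_of_neg (show (-1:ℝ) < 0 by norm_num)]
    rw [cfc_congr heq, cfc_id ℝ G hGsa]
  have hg0 : g 0 = F := by
    rw [hgdef]
    have ha0 : a 0 = F := by simp [hadef]
    rw [ha0]
    exact hbv F hF hF2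
  have hgpi : g (Real.pi/2) = F' := by
    rw [hgdef]
    have hapi : a (Real.pi/2) = F' := by simp [hadef]
    rw [hapi]
    exact hbv F' hF' hF'2
  -- continuity
  set D : ℝ := 2 * c₀ * Real.sqrt c₀ with hDdef
  have hD : 0 < D := by rw [hDdef]; positivity
  set M : ℝ := ‖K‖ / D with hMdef
  have hM : 0 ≤ M := by rw [hMdef]; positivity
  set H : ℝ → B := fun σ => cfc (fun k : ℝ => (Real.sqrt (1 + σ * k))⁻¹) K with hHdef
  have hfcont : ∀ σ ∈ Set.Icc (0:ℝ) (1/2),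
      ContinuousOn (fun k : ℝ => (Real.sqrt (1 + σ * k))⁻¹) (spectrum ℝ K) := by
    intro σ hσ
    apply ContinuousOn.inv₀
    · fun_prop
    · intro k hk
      exact (Real.sqrt_pos.mpr (hc₀.trans_le (hposK σ hσ k hk))).ne'
  have hHlip : ∀ σ ∈ Set.Icc (0:ℝ) (1/2), ∀ τ ∈ Set.Icc (0:ℝ) (1/2),
      ‖H σ - H τ‖ ≤ M * |σ - τ| := by
    intro σ hσ τ hτ
    have hsub : H σ - H τ
        = cfc (fun k : ℝ => (Real.sqrt (1 + σ * k))⁻¹ - (Real.sqrt (1 + τ * k))⁻¹) K := by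
      simp only [hHdef]
      exact (cfc_sub _ _ K (hfcont σ hσ) (hfcont τ hτ)).symm
    rw [hsub]
    apply norm_cfc_le (by positivity)
    intro k hk
    have hest := auxInvSqrtLip hc₀ (hposK σ hσ k hk) (hposK τ hτ k hk)
    have hkK : |k| ≤ ‖K‖ := by
      have := spectrum.norm_le_norm_of_mem hk
      rwa [Real.norm_eq_abs] at this
    rw [Real.norm_eq_abs]
    calc |(Real.sqrt (1 + σ * k))⁻¹ - (Real.sqrt (1 + τ * k))⁻¹|
        ≤ |(1 + τ * k) - (1 + σ * k)| / D := hest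
      _ = |τ - σ| * |k| / D := by
          rw [show (1 + τ*k) - (1 + σ*k) = (τ - σ) * k by ring, abs_mul]
      _ ≤ |τ - σ| * ‖K‖ / D := by
          exact (div_le_div_iff_of_pos_right hD).mpr (mul_le_mul_of_nonneg_left hkK (abs_nonneg _))
      _ = M * |σ - τ| := by rw [hMdef, abs_sub_comm]; ring
  have hHcont : ContinuousOn H (Set.Icc (0:ℝ) (1/2)) := by
    have hlip : LipschitzOnWith (Real.toNNReal M) H (Set.Icc (0:ℝ) (1/2)) := by
      apply LipschitzOnWith.of_dist_le_mul
      intro σ hσ τ hτ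
      rw [dist_eq_norm, Real.dist_eq]
      calc ‖H σ - H τ‖ ≤ M * |σ - τ| := hHlip σ hσ τ hτ
        _ ≤ Real.toNNReal M * |σ - τ| :=
            mul_le_mul_of_nonneg_right (Real.le_coe_toNNReal M) (abs_nonneg _)
    exact hlip.continuousOn
  -- the key factorization
  have hA : ∀ t ∈ Set.Icc (0:ℝ) (Real.pi/2), g t = a t * H (Real.sin t * Real.cos t) := by
    intro t ht
    have hσ := hσmem t ht
    set σ := Real.sin t * Real.cos t with hσdef
    have hxne := hne t ht
    have e1 : cfc Real.sign (a t) = cfc (fun x : ℝ => x * (Real.sqrt (x * x))⁻¹) (a t) := by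
      apply cfc_congr
      intro x hx
      have hx0 := hxne x hx
      show Real.sign x = x * (Real.sqrt (x * x))⁻¹
      rw [Real.sqrt_mul_self_eq_abs]
      rcases lt_or_gt_of_ne hx0 with h | h
      · rw [Real.sign_of_neg h, abs_of_neg h, inv_neg, mul_neg, mul_inv_cancel₀ h.ne]
      · rw [Real.sign_of_pos h, abs_of_pos h, mul_inv_cancel₀ h.ne']
    have hcont2 : ContinuousOn (fun x : ℝ => (Real.sqrt (x * x))⁻¹) (spectrum ℝ (a t)) := by
      apply ContinuousOn.inv₀
      · fun_prop
      · intro x hx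
        rw [Real.sqrt_mul_self_eq_abs]
        exact abs_ne_zero.mpr (hxne x hx)
    have e2 : cfc (fun x : ℝ => x * (Real.sqrt (x * x))⁻¹) (a t)
        = a t * cfc (fun x : ℝ => (Real.sqrt (x * x))⁻¹) (a t) := by
      rw [cfc_mul (fun x : ℝ => x) (fun x : ℝ => (Real.sqrt (x * x))⁻¹) (a t)
        (by fun_prop) hcont2, cfc_id' ℝ (a t) (haSA t)]
    have himg : ∀ y ∈ (fun x : ℝ => x * x) '' spectrum ℝ (a t), c₀ ≤ y := by
      rintro y ⟨x, hx, rfl⟩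
      have := hspec2 t ht x hx
      simpa [← sq] using this
    have hcontg : ContinuousOn (fun y : ℝ => (Real.sqrt y)⁻¹)
        ((fun x : ℝ => x * x) '' spectrum ℝ (a t)) := by
      apply ContinuousOn.inv₀
      · fun_prop
      · intro y hy
        exact (Real.sqrt_pos.mpr (hc₀.trans_le (himg y hy))).ne'
    have e3 : cfc (fun x : ℝ => (Real.sqrt (x * x))⁻¹) (a t)
        = cfc (fun y : ℝ => (Real.sqrt y)⁻¹) (a t ^ 2) := by
      have hcomp := cfc_comp (R := ℝ) (fun y : ℝ => (Real.sqrt y)⁻¹) (fun x : ℝ => x * x)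
        (a t) (haSA t) hcontg (by fun_prop)
      rw [show ((fun y : ℝ => (Real.sqrt y)⁻¹) ∘ (fun x : ℝ => x * x))
          = fun x : ℝ => (Real.sqrt (x * x))⁻¹ from rfl] at hcomp
      rw [hcomp]
      congr 1
      rw [show (fun x : ℝ => x * x) = fun x : ℝ => x ^ 2 from funext fun x => (sq x).symm]
      exact cfc_pow_id (R := ℝ) (a t) 2 (haSA t)
    have e4 : a t ^ 2 = cfc (fun k : ℝ => 1 + σ * k) K := by
      rw [hsq t, cfc_const_add (R := ℝ) 1 (fun k : ℝ => σ * k) K (by fun_prop) hK,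
        cfc_const_mul_id σ K hK, map_one]
    have himg2 : ∀ y ∈ (fun k : ℝ => 1 + σ * k) '' spectrum ℝ K, c₀ ≤ y := by
      rintro y ⟨k, hk, rfl⟩
      exact hposK σ hσ k hk
    have hcontg2 : ContinuousOn (fun y : ℝ => (Real.sqrt y)⁻¹)
        ((fun k : ℝ => 1 + σ * k) '' spectrum ℝ K) := by
      apply ContinuousOn.inv₀
      · fun_prop
      · intro y hy
        exact (Real.sqrt_pos.mpr (hc₀.trans_le (himg2 y hy))).ne'
    have e5 : cfc (fun y : ℝ => (Real.sqrt y)⁻¹) (cfc (fun k : ℝ => 1 + σ * k) K) = H σ := by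
      rw [← cfc_comp (R := ℝ) (fun y : ℝ => (Real.sqrt y)⁻¹) (fun k : ℝ => 1 + σ * k) K hK
        hcontg2 (by fun_prop)]
      rfl
    rw [hgdef, e1, e2, e3, e4, e5]
  have hacont : Continuous a := by
    rw [hadef]; fun_prop
  have hgcont : ContinuousOn g (Set.Icc (0:ℝ) (Real.pi/2)) := by
    apply ContinuousOn.congr (f := fun t => a t * H (Real.sin t * Real.cos t))
    · exact (hacont.continuousOn).mul
        (hHcont.comp (by fun_prop) fun t ht => hσmem t ht)
    · intro t ht
      exact hA t ht
  exact ⟨hgcont, hg0, hgpi, fun t ht => ⟨hSAg t, hunit t ht⟩⟩
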